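/- For positive reals r_i, r_j, r_k, r_ℓ, define Q = (1/r_i + 1/r_j + 1/r_k + 1/r_ℓ)² - 2(1/r_i² + 1/r_j² + 1/r_k² + 1/r_ℓ²). Then the Cayley–Menger determinant for the six edge lengths ℓ_ab = r_a + r_b yields a squared volume satisfying V² = (1/9) r_i² r_j² r_k² r_ℓ² Q. -/

import Mathlib

set_option maxHeartbeats 4000000

private lemma fin_v2 (n : ℕ) : ((2 : Fin (n+3)) : ℕ) = 2 := rfl
private lemma fin_v3 (n : ℕ) : ((3 : Fin (n+4)) : ℕ) = 3 := rfl
private lemma fin_v4 (n : ℕ) : ((4 : Fin (n+5)) : ℕ) = 4 := rfl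
private lemma fin_cs2 (n : ℕ) : Fin.castSucc (2 : Fin (n+3)) = 2 := rfl
private lemma fin_s2 (n : ℕ) : Fin.succ (2 : Fin (n+3)) = 3 := rfl
private lemma fin_cs3 (n : ℕ) : Fin.castSucc (3 : Fin (n+4)) = 3 := rfl
private lemma fin_s3 (n : ℕ) : Fin.succ (3 : Fin (n+4)) = 4 := rfl


/-- The Cayley–Menger determinant of a conformal tetrahedron gives
    V² = (1/9) ri² rj² rk² rl² Q where Q is the Descartes quadratic. -/
theorem conformal_tetrahedron_volume (ri rj rk rl : ℝ)
    (hi : 0 < ri) (hj : 0 < rj) (hk : 0 < rk) (hl : 0 < rl) :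
    (Matrix.det !![0, 1, 1, 1, 1;
        1, 0, (ri + rj) ^ 2, (ri + rk) ^ 2, (ri + rl) ^ 2;
        1, (ri + rj) ^ 2, 0, (rj + rk) ^ 2, (rj + rl) ^ 2;
        1, (ri + rk) ^ 2, (rj + rk) ^ 2, 0, (rk + rl) ^ 2;
        1, (ri + rl) ^ 2, (rj + rl) ^ 2, (rk + rl) ^ 2, 0] : ℝ) / 288 =
      (1 / 9) * ri ^ 2 * rj ^ 2 * rk ^ 2 * rl ^ 2 *
        ((1 / ri + 1 / rj + 1 / rk + 1 / rl) ^ 2 -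
          2 * (1 / ri ^ 2 + 1 / rj ^ 2 + 1 / rk ^ 2 + 1 / rl ^ 2)) := by
  simp [Matrix.det_succ_row_zero, Fin.sum_univ_succ, Fin.succAbove,
    fin_cs2, fin_s2, fin_cs3, fin_s3, Matrix.cons_val_two, Matrix.cons_val_three,
    Matrix.cons_val_four, Matrix.vecHead, Matrix.vecTail, fin_v2, fin_v3, fin_v4]
  field_simp
  ring
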